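/- Let Q and Q_n be quantizers on ℝ^d with convex cells B_1,…,B_M and B_1^n,…,B_M^n respectively, and let P be a probability measure on ℝ^d admitting a density. If PQ_n → PQ weakly, then P(B_i^n △ B_i) → 0 for every i, and consequently PQ_n → PQ in total variation. -/

import Mathlib

open MeasureTheory Filter Topology BoundedContinuousFunction

/-- Portmanteau for null-frontier sets, topological version. -/
lemma aux_tendsto_of_null_frontier {Ω ι : Type*} [MeasurableSpace Ω] [TopologicalSpace Ω]
    [OpensMeasurableSpace Ω] [HasOuterApproxClosed Ω] {L : Filter ι}
    {μ : ProbabilityMeasure Ω} {μs : ι → ProbabilityMeasure Ω}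
    (hlim : Tendsto μs L (𝓝 μ)) {E : Set Ω}
    (hE : (μ : Measure Ω) (frontier E) = 0) :
    Tendsto (fun i => (μs i : Measure Ω) E) L (𝓝 ((μ : Measure Ω) E)) :=
  tendsto_measure_of_null_frontier
    (limsup_measure_closed_le_iff_liminf_measure_open_ge.mp
      (fun _F hF => ProbabilityMeasure.limsup_measure_closed_le_of_tendsto hlim hF)) hE

/-- Total variation distance: `2 sup_B |μ(B) − ν(B)|`. -/
noncomputable def dTV {X : Type*} [MeasurableSpace X] (μ ν : Measure X) : ℝ :=
  2 * ⨆ B : Set X, |(μ B).toReal - (ν B).toReal|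

/-- If `Q_n, Q` are quantizers on ℝ^d with convex cells, `P` admits a density, and
`PQ_n → PQ` weakly, then `P(B_i^n △ B_i) → 0` for every `i`, and `PQ_n → PQ` in
total variation. -/
theorem convex_cell_weak_to_tv
    (d M : ℕ) (P : Measure (EuclideanSpace ℝ (Fin d))) [IsProbabilityMeasure P]
    (hP : P ≪ volume)
    (Q : EuclideanSpace ℝ (Fin d) → Fin M) (Qn : ℕ → EuclideanSpace ℝ (Fin d) → Fin M)
    (hQ : Measurable Q) (hQn : ∀ n, Measurable (Qn n))
    (hQconv : ∀ i, Convex ℝ (Q ⁻¹' {i})) (hQnconv : ∀ n i, Convex ℝ ((Qn n) ⁻¹' {i}))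
    (hweak : ∀ g : (EuclideanSpace ℝ (Fin d) × Fin M) →ᵇ ℝ,
      Tendsto (fun n => ∫ z, g z ∂(P.map (fun x => (x, Qn n x)))) atTop
        (𝓝 (∫ z, g z ∂(P.map (fun x => (x, Q x)))))) :
    (∀ i : Fin M,
        Tendsto (fun n => (P (symmDiff ((Qn n) ⁻¹' {i}) (Q ⁻¹' {i}))).toReal) atTop (𝓝 0)) ∧
      Tendsto (fun n => dTV (P.map (fun x => (x, Qn n x))) (P.map (fun x => (x, Q x))))
        atTop (𝓝 0) := by
  have hf : ∀ n, Measurable (fun x : EuclideanSpace ℝ (Fin d) => (x, Qn n x)) :=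
    fun n => measurable_id.prodMk (hQn n)
  have hg : Measurable (fun x : EuclideanSpace ℝ (Fin d) => (x, Q x)) :=
    measurable_id.prodMk hQ
  haveI hPn : ∀ n, IsProbabilityMeasure (P.map (fun x => (x, Qn n x))) :=
    fun n => Measure.isProbabilityMeasure_map (hf n).aemeasurable
  haveI hPl : IsProbabilityMeasure (P.map (fun x => (x, Q x))) :=
    Measure.isProbabilityMeasure_map hg.aemeasurable
  set μ : ProbabilityMeasure (EuclideanSpace ℝ (Fin d) × Fin M) :=
    ⟨P.map (fun x => (x, Q x)), hPl⟩ with hμdef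
  set μs : ℕ → ProbabilityMeasure (EuclideanSpace ℝ (Fin d) × Fin M) :=
    fun n => ⟨P.map (fun x => (x, Qn n x)), hPn n⟩ with hμsdef
  have hlim : Tendsto μs atTop (𝓝 μ) :=
    ProbabilityMeasure.tendsto_iff_forall_integral_tendsto.mpr hweak
  have hBnull : ∀ i : Fin M, P (frontier (Q ⁻¹' {i})) = 0 :=
    fun i => hP ((hQconv i).addHaar_frontier volume)
  -- measurability of cells
  have mB : ∀ i : Fin M, MeasurableSet (Q ⁻¹' {i}) := fun i => hQ (measurableSet_singleton i)
  have mA : ∀ n (i : Fin M), MeasurableSet (Qn n ⁻¹' {i}) :=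
    fun n i => hQn n (measurableSet_singleton i)
  -- convergence of P (B i ∩ A n i) to P (B i)
  have h1 : ∀ i : Fin M,
      Tendsto (fun n => P ((Q ⁻¹' {i}) ∩ (Qn n ⁻¹' {i}))) atTop (𝓝 (P (Q ⁻¹' {i}))) := by
    intro i
    set E : Set (EuclideanSpace ℝ (Fin d) × Fin M) := (Q ⁻¹' {i}) ×ˢ ({i} : Set (Fin M))
      with hEdef
    have hEnull : (μ : Measure _) (frontier E) = 0 := by
      have hsub : frontier E ⊆ frontier (Q ⁻¹' {i}) ×ˢ (Set.univ : Set (Fin M)) := by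
        rw [hEdef, frontier_prod_eq]
        intro z hz
        rcases hz with hz | hz
        · simp at hz
        · exact ⟨hz.1, Set.mem_univ _⟩
      have hle : (μ : Measure _) (frontier E) ≤
          (μ : Measure _) (frontier (Q ⁻¹' {i}) ×ˢ (Set.univ : Set (Fin M))) :=
        measure_mono hsub
      have : (μ : Measure _) (frontier (Q ⁻¹' {i}) ×ˢ (Set.univ : Set (Fin M))) = 0 := by
        show (P.map (fun x => (x, Q x))) _ = 0
        rw [Measure.map_apply hg (isClosed_frontier.measurableSet.prod MeasurableSet.univ)]
        have : (fun x => (x, Q x)) ⁻¹' (frontier (Q ⁻¹' {i}) ×ˢ (Set.univ : Set (Fin M)))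
            = frontier (Q ⁻¹' {i}) := by
          ext x; simp
        rw [this]; exact hBnull i
      exact le_antisymm (le_trans hle this.le) zero_le
    have key := aux_tendsto_of_null_frontier hlim hEnull
    have hmE : MeasurableSet E := (mB i).prod (measurableSet_singleton i)
    have e1 : ∀ n, (μs n : Measure _) E = P ((Q ⁻¹' {i}) ∩ (Qn n ⁻¹' {i})) := by
      intro n
      show (P.map (fun x => (x, Qn n x))) E = _
      have hpre : (fun x => (x, Qn n x)) ⁻¹' E = (Q ⁻¹' {i}) ∩ (Qn n ⁻¹' {i}) := by
        ext x
        simp only [hEdef, Set.mem_preimage, Set.mem_prod, Set.mem_singleton_iff,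
          Set.mem_inter_iff, and_comm]
      rw [Measure.map_apply (hf n) hmE, hpre]
    have e2 : (μ : Measure _) E = P (Q ⁻¹' {i}) := by
      show (P.map (fun x => (x, Q x))) E = _
      have hpre : (fun x => (x, Q x)) ⁻¹' E = Q ⁻¹' {i} := by
        ext x
        simp only [hEdef, Set.mem_preimage, Set.mem_prod, Set.mem_singleton_iff,
          Set.mem_inter_iff, and_self]
      rw [Measure.map_apply hg hmE, hpre]
    rw [← e2]
    exact key.congr (fun n => (e1 n))
  -- convergence of P (A n i) to P (B i)
  have h2 : ∀ i : Fin M,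
      Tendsto (fun n => P (Qn n ⁻¹' {i})) atTop (𝓝 (P (Q ⁻¹' {i}))) := by
    intro i
    set E : Set (EuclideanSpace ℝ (Fin d) × Fin M) :=
      (Set.univ : Set (EuclideanSpace ℝ (Fin d))) ×ˢ ({i} : Set (Fin M)) with hEdef
    have hEnull : (μ : Measure _) (frontier E) = 0 := by
      have : frontier E = ∅ := by
        rw [hEdef, frontier_prod_eq]
        simp
      rw [this]; exact measure_empty
    have key := aux_tendsto_of_null_frontier hlim hEnull
    have hmE : MeasurableSet E := MeasurableSet.univ.prod (measurableSet_singleton i)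
    have e1 : ∀ n, (μs n : Measure _) E = P (Qn n ⁻¹' {i}) := by
      intro n
      show (P.map (fun x => (x, Qn n x))) E = _
      have hpre : (fun x => (x, Qn n x)) ⁻¹' E = Qn n ⁻¹' {i} := by
        ext x
        simp only [hEdef, Set.mem_preimage, Set.mem_prod, Set.mem_singleton_iff, Set.mem_univ,
          true_and]
      rw [Measure.map_apply (hf n) hmE, hpre]
    have e2 : (μ : Measure _) E = P (Q ⁻¹' {i}) := by
      show (P.map (fun x => (x, Q x))) E = _
      have hpre : (fun x => (x, Q x)) ⁻¹' E = Q ⁻¹' {i} := by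
        ext x
        simp only [hEdef, Set.mem_preimage, Set.mem_prod, Set.mem_singleton_iff, Set.mem_univ,
          true_and]
      rw [Measure.map_apply hg hmE, hpre]
    rw [← e2]
    exact key.congr (fun n => (e1 n))
  -- Part 1: symmetric differences tend to zero
  have part1 : ∀ i : Fin M,
      Tendsto (fun n => (P (symmDiff ((Qn n) ⁻¹' {i}) (Q ⁻¹' {i}))).toReal) atTop (𝓝 0) := by
    intro i
    have hsd : ∀ n, (P (symmDiff ((Qn n) ⁻¹' {i}) (Q ⁻¹' {i}))).toReal
        = ((P (Qn n ⁻¹' {i})).toReal - (P ((Q ⁻¹' {i}) ∩ (Qn n ⁻¹' {i}))).toReal)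
          + ((P (Q ⁻¹' {i})).toReal - (P ((Q ⁻¹' {i}) ∩ (Qn n ⁻¹' {i}))).toReal) := by
      intro n
      have d1 : P ((Qn n ⁻¹' {i}) ∩ (Q ⁻¹' {i})) + P ((Qn n ⁻¹' {i}) \ (Q ⁻¹' {i}))
          = P (Qn n ⁻¹' {i}) := measure_inter_add_diff _ (mB i)
      have d2 : P ((Q ⁻¹' {i}) ∩ (Qn n ⁻¹' {i})) + P ((Q ⁻¹' {i}) \ (Qn n ⁻¹' {i}))
          = P (Q ⁻¹' {i}) := measure_inter_add_diff _ (mA n i)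
      have du : P (symmDiff ((Qn n) ⁻¹' {i}) (Q ⁻¹' {i}))
          = P ((Qn n ⁻¹' {i}) \ (Q ⁻¹' {i})) + P ((Q ⁻¹' {i}) \ (Qn n ⁻¹' {i})) := by
        rw [Set.symmDiff_def, measure_union disjoint_sdiff_sdiff ((mB i).diff (mA n i))]
      have hic : P ((Qn n ⁻¹' {i}) ∩ (Q ⁻¹' {i})) = P ((Q ⁻¹' {i}) ∩ (Qn n ⁻¹' {i})) := by
        rw [Set.inter_comm]
      rw [hic] at d1
      have r1 := congrArg ENNReal.toReal d1
      have r2 := congrArg ENNReal.toReal d2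
      have r3 := congrArg ENNReal.toReal du
      rw [ENNReal.toReal_add (measure_ne_top P _) (measure_ne_top P _)] at r1 r2 r3
      linarith
    have t1 : Tendsto (fun n => (P ((Q ⁻¹' {i}) ∩ (Qn n ⁻¹' {i}))).toReal) atTop
        (𝓝 (P (Q ⁻¹' {i})).toReal) :=
      (ENNReal.tendsto_toReal (measure_ne_top P _)).comp (h1 i)
    have t2 : Tendsto (fun n => (P (Qn n ⁻¹' {i})).toReal) atTop
        (𝓝 (P (Q ⁻¹' {i})).toReal) :=
      (ENNReal.tendsto_toReal (measure_ne_top P _)).comp (h2 i)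
    have tcomb := (t2.sub t1).add (((tendsto_const_nhds :
        Tendsto (fun _ : ℕ => (P (Q ⁻¹' {i})).toReal) atTop _)).sub t1)
    have : ((P (Q ⁻¹' {i})).toReal - (P (Q ⁻¹' {i})).toReal)
        + ((P (Q ⁻¹' {i})).toReal - (P (Q ⁻¹' {i})).toReal) = 0 := by ring
    rw [this] at tcomb
    exact tcomb.congr (fun n => (hsd n).symm)
  refine ⟨part1, ?_⟩
  -- Part 2: total variation
  set ε : ℕ → ℝ := fun n => ∑ i : Fin M, (P (symmDiff ((Qn n) ⁻¹' {i}) (Q ⁻¹' {i}))).toReal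
    with hεdef
  have hεlim : Tendsto ε atTop (𝓝 0) := by
    have := tendsto_finset_sum (Finset.univ : Finset (Fin M))
      (fun i _ => part1 i)
    simpa using this
  have hεbound : ∀ n (C : Set (EuclideanSpace ℝ (Fin d) × Fin M)),
      |((P.map (fun x => (x, Qn n x))) C).toReal - ((P.map (fun x => (x, Q x))) C).toReal|
        ≤ ε n := by
    intro n C
    set S : Set (EuclideanSpace ℝ (Fin d)) :=
      ⋃ i : Fin M, symmDiff ((Qn n) ⁻¹' {i}) (Q ⁻¹' {i}) with hSdef
    have hS : (P S).toReal ≤ ε n := by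
      have h1' : P S ≤ ∑ i : Fin M, P (symmDiff ((Qn n) ⁻¹' {i}) (Q ⁻¹' {i})) := by
        refine le_trans (measure_iUnion_le _) ?_
        rw [tsum_fintype]
      have h2' : (∑ i : Fin M, P (symmDiff ((Qn n) ⁻¹' {i}) (Q ⁻¹' {i}))) ≠ ⊤ :=
        (ENNReal.sum_lt_top.mpr (fun i _ => measure_lt_top P _)).ne
      calc (P S).toReal ≤ (∑ i : Fin M, P (symmDiff ((Qn n) ⁻¹' {i}) (Q ⁻¹' {i}))).toReal :=
            ENNReal.toReal_mono h2' h1'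
        _ = ε n := ENNReal.toReal_sum (fun i _ => measure_ne_top P _)
    -- key: symmetric inequalities
    have hkey : ∀ (φ ψ : EuclideanSpace ℝ (Fin d) → Fin M), Measurable φ → Measurable ψ →
        (∀ x, φ x ≠ ψ x → x ∈ S) →
        (P.map (fun x => (x, φ x))) C ≤ (P.map (fun x => (x, ψ x))) C + P S := by
      intro φ ψ hφ hψ hdiff
      have hφ' : Measurable (fun x : EuclideanSpace ℝ (Fin d) => (x, φ x)) :=
        measurable_id.prodMk hφ
      have hψ' : Measurable (fun x : EuclideanSpace ℝ (Fin d) => (x, ψ x)) :=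
        measurable_id.prodMk hψ
      set D := toMeasurable (P.map (fun x => (x, ψ x))) C with hDdef
      have hCD : C ⊆ D := subset_toMeasurable _ _
      have hmD : MeasurableSet D := measurableSet_toMeasurable _ _
      calc (P.map (fun x => (x, φ x))) C ≤ (P.map (fun x => (x, φ x))) D := measure_mono hCD
        _ = P ((fun x => (x, φ x)) ⁻¹' D) :=
            Measure.map_apply hφ' hmD
        _ ≤ P (((fun x => (x, ψ x)) ⁻¹' D) ∪ S) := by
            refine measure_mono ?_
            intro x hx
            by_cases hxx : ψ x = φ x
            · left
              show (x, ψ x) ∈ D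
              rw [hxx]; exact hx
            · right
              exact hdiff x (fun h => hxx h.symm)
        _ ≤ P ((fun x => (x, ψ x)) ⁻¹' D) + P S := measure_union_le _ _
        _ = (P.map (fun x => (x, ψ x))) D + P S := by
            rw [Measure.map_apply hψ' hmD]
        _ = (P.map (fun x => (x, ψ x))) C + P S := by rw [hDdef, measure_toMeasurable]
    have hdiff1 : ∀ x, Qn n x ≠ Q x → x ∈ S := by
      intro x hx
      refine Set.mem_iUnion.mpr ⟨Qn n x, ?_⟩
      rw [Set.mem_symmDiff]
      left
      exact ⟨rfl, fun h => hx (h.symm ▸ rfl)⟩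
    have hdiff2 : ∀ x, Q x ≠ Qn n x → x ∈ S := fun x hx => hdiff1 x (fun h => hx h.symm)
    have i1 := hkey (Qn n) Q (hQn n) hQ hdiff1
    have i2 := hkey Q (Qn n) hQ (hQn n) hdiff2
    rw [abs_sub_le_iff]
    constructor
    · have := ENNReal.toReal_mono
        (by exact ENNReal.add_ne_top.mpr ⟨measure_ne_top _ _, measure_ne_top _ _⟩) i1
      rw [ENNReal.toReal_add (measure_ne_top _ _) (measure_ne_top _ _)] at this
      linarith
    · have := ENNReal.toReal_mono
        (by exact ENNReal.add_ne_top.mpr ⟨measure_ne_top _ _, measure_ne_top _ _⟩) i2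
      rw [ENNReal.toReal_add (measure_ne_top _ _) (measure_ne_top _ _)] at this
      linarith
  -- conclude via squeeze
  have hbdd : ∀ n, BddAbove (Set.range fun C : Set (EuclideanSpace ℝ (Fin d) × Fin M) =>
      |((P.map (fun x => (x, Qn n x))) C).toReal - ((P.map (fun x => (x, Q x))) C).toReal|) := by
    intro n
    exact ⟨ε n, by rintro r ⟨C, rfl⟩; exact hεbound n C⟩
  have hup : ∀ n, dTV (P.map (fun x => (x, Qn n x))) (P.map (fun x => (x, Q x))) ≤ 2 * ε n := by
    intro n
    unfold dTV
    have : (⨆ C : Set (EuclideanSpace ℝ (Fin d) × Fin M),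
        |((P.map (fun x => (x, Qn n x))) C).toReal - ((P.map (fun x => (x, Q x))) C).toReal|)
          ≤ ε n := ciSup_le (hεbound n)
    linarith
  have hlow : ∀ n, 0 ≤ dTV (P.map (fun x => (x, Qn n x))) (P.map (fun x => (x, Q x))) := by
    intro n
    unfold dTV
    have h0 : (0:ℝ) = |((P.map (fun x => (x, Qn n x))) (∅ : Set _)).toReal
        - ((P.map (fun x => (x, Q x))) (∅ : Set _)).toReal| := by simp
    have := le_ciSup (hbdd n) (∅ : Set (EuclideanSpace ℝ (Fin d) × Fin M))
    rw [← h0] at this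
    linarith
  have h2ε : Tendsto (fun n => 2 * ε n) atTop (𝓝 0) := by
    have := hεlim.const_mul (2:ℝ)
    simpa using this
  exact tendsto_of_tendsto_of_tendsto_of_le_of_le tendsto_const_nhds h2ε hlow hup
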